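/- If the map φ ↦ C(φ) from L^∞(Ω, ℝ^N) to the space of elasticity tensors is Fréchet differentiable and C(φ) is uniformly coercive near φ, then the control-to-state operator S : L^∞(Ω,ℝ^N) → H_D^1(Ω,ℝ^d), defined by S(φ) = u solving ∫_Ω ℰ(u):C(φ)ℰ(η) = ∫_Ω (1−φ^N) f·η + ∫_{Γ_g} g·η for all η ∈ H_D^1, is Fréchet differentiable, and u* = S'(φ)h is the unique solution of ∫_Ω ℰ(u*):C(φ)ℰ(η) = −∫_Ω ℰ(u):(C'(φ)h)ℰ(η) − ∫_Ω h^N f·η for all η ∈ H_D^1. -/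

import Mathlib

open MeasureTheory RealInnerProductSpace Metric

open scoped ENNReal NNReal

section Aux

variable {X : Type*} [MeasurableSpace X] {μ : Measure X} {N d : ℕ}

private lemma abs_coord_le_norm (v : EuclideanSpace ℝ (Fin N)) (i : Fin N) : ‖v i‖ ≤ ‖v‖ := by
  rw [EuclideanSpace.norm_eq]
  have h1 : ‖v i‖ = Real.sqrt (‖v i‖ ^ 2) := by
    rw [Real.sqrt_sq (norm_nonneg _)]
  rw [h1]
  apply Real.sqrt_le_sqrt
  exact Finset.single_le_sum (f := fun j => ‖v j‖ ^ 2) (fun j _ => by positivity)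
    (Finset.mem_univ i)

private lemma linfty_ae_bound (φ : Lp (EuclideanSpace ℝ (Fin N)) ⊤ μ) :
    ∀ᵐ x ∂μ, ‖(φ : X → EuclideanSpace ℝ (Fin N)) x‖ ≤ ‖φ‖ := by
  have h1 : ∀ᵐ x ∂μ, (‖(φ : X → EuclideanSpace ℝ (Fin N)) x‖₊ : ℝ≥0∞) ≤
      eLpNormEssSup (φ : X → EuclideanSpace ℝ (Fin N)) μ := ae_le_eLpNormEssSup
  have hne : eLpNormEssSup (φ : X → EuclideanSpace ℝ (Fin N)) μ ≠ ⊤ := by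
    have := Lp.eLpNorm_ne_top φ
    rwa [eLpNorm_exponent_top] at this
  filter_upwards [h1] with x hx
  have hnorm : ‖φ‖ = (eLpNormEssSup (φ : X → EuclideanSpace ℝ (Fin N)) μ).toReal := by
    rw [Lp.norm_def, eLpNorm_exponent_top]
  rw [hnorm]
  have : ‖(φ : X → EuclideanSpace ℝ (Fin N)) x‖
      = ((‖(φ : X → EuclideanSpace ℝ (Fin N)) x‖₊ : ℝ≥0∞)).toReal := by simp
  rw [this]
  exact ENNReal.toReal_mono hne hx

private lemma smul_ae_le (φ : Lp (EuclideanSpace ℝ (Fin N)) ⊤ μ) (i : Fin N)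
    (f : Lp (EuclideanSpace ℝ (Fin d)) 2 μ) :
    ∀ᵐ x ∂μ, ‖((φ : X → EuclideanSpace ℝ (Fin N)) x i) •
        ((f : X → EuclideanSpace ℝ (Fin d)) x)‖ ≤
      ‖φ‖ * ‖(f : X → EuclideanSpace ℝ (Fin d)) x‖ := by
  filter_upwards [linfty_ae_bound φ] with x hx
  rw [norm_smul]
  exact mul_le_mul_of_nonneg_right
    ((abs_coord_le_norm _ i).trans hx) (norm_nonneg _)

private lemma memLp_smul (φ : Lp (EuclideanSpace ℝ (Fin N)) ⊤ μ) (i : Fin N)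
    (f : Lp (EuclideanSpace ℝ (Fin d)) 2 μ) :
    MemLp (fun x => ((φ : X → EuclideanSpace ℝ (Fin N)) x i) •
      ((f : X → EuclideanSpace ℝ (Fin d)) x)) 2 μ := by
  refine MemLp.of_le_mul (Lp.memLp f) ?_ (smul_ae_le φ i f)
  exact ((EuclideanSpace.proj i).continuous.comp_aestronglyMeasurable
    (Lp.aestronglyMeasurable φ)).smul (Lp.aestronglyMeasurable f)

/-- multiplication by the `i`-th coordinate of an `L^∞` function, as a continuous linear map
from `L^∞` to `L²`, with a fixed `f ∈ L²`. -/
noncomputable def mulCLM (i : Fin N) (f : Lp (EuclideanSpace ℝ (Fin d)) 2 μ) :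
    Lp (EuclideanSpace ℝ (Fin N)) ⊤ μ →L[ℝ] Lp (EuclideanSpace ℝ (Fin d)) 2 μ :=
  LinearMap.mkContinuous
    { toFun := fun φ => (memLp_smul φ i f).toLp _
      map_add' := fun φ ψ => by
        rw [← MemLp.toLp_add]
        apply MemLp.toLp_congr
        filter_upwards [Lp.coeFn_add φ ψ] with x hx
        simp only [Pi.add_apply] at hx ⊢
        rw [hx]
        simp [PiLp.add_apply, add_smul]
      map_smul' := fun r φ => by
        simp only [RingHom.id_apply]
        rw [← MemLp.toLp_const_smul]
        apply MemLp.toLp_congr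
        filter_upwards [Lp.coeFn_smul r φ] with x hx
        simp only [Pi.smul_apply] at hx ⊢
        rw [hx]
        simp [PiLp.smul_apply, smul_smul] }
    ‖f‖
    (fun φ => by
      simp only [LinearMap.coe_mk, AddHom.coe_mk]
      rw [Lp.norm_toLp]
      have hle := eLpNorm_le_nnreal_smul_eLpNorm_of_ae_le_mul (μ := μ) (c := ‖φ‖₊)
        (f := fun x => ((φ : X → EuclideanSpace ℝ (Fin N)) x i) •
          ((f : X → EuclideanSpace ℝ (Fin d)) x))
        (g := (f : X → EuclideanSpace ℝ (Fin d))) ?_ 2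
      · calc (eLpNorm (fun x => ((φ : X → EuclideanSpace ℝ (Fin N)) x i) •
            ((f : X → EuclideanSpace ℝ (Fin d)) x)) 2 μ).toReal
            ≤ ((‖φ‖₊ : ℝ≥0∞) * eLpNorm (f : X → EuclideanSpace ℝ (Fin d)) 2 μ).toReal := by
              apply ENNReal.toReal_mono
              · exact ENNReal.mul_ne_top ENNReal.coe_ne_top (Lp.eLpNorm_ne_top f)
              · simpa [ENNReal.smul_def] using hle
          _ = ‖φ‖ * ‖f‖ := by
              rw [ENNReal.toReal_mul]
              simp [Lp.norm_def]
          _ = ‖f‖ * ‖φ‖ := mul_comm _ _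
      · filter_upwards [smul_ae_le φ i f] with x hx
        rw [← NNReal.coe_le_coe]
        simpa using hx)

private lemma coeFn_mulCLM (i : Fin N) (f : Lp (EuclideanSpace ℝ (Fin d)) 2 μ)
    (φ : Lp (EuclideanSpace ℝ (Fin N)) ⊤ μ) :
    (mulCLM i f φ : X → EuclideanSpace ℝ (Fin d)) =ᵐ[μ]
      fun x => ((φ : X → EuclideanSpace ℝ (Fin N)) x i) •
        ((f : X → EuclideanSpace ℝ (Fin d)) x) :=
  MemLp.coeFn_toLp (memLp_smul φ i f)

end Aux

set_option maxHeartbeats 2000000 in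
set_option synthInstance.maxHeartbeats 400000 in
/-- Fréchet differentiability of the control-to-state operator (Theorem 3.1):
if `φ ↦ C(φ)` is Fréchet differentiable and uniformly coercive near `φ₀`, then
`S : L^∞(Ω,ℝ^N) → H¹_D(Ω,ℝ^d)`, `S(φ) = u` solving
`∫ ℰ(u):C(φ)ℰ(η) = ∫ (1-φ^N) f·η + ∫_{Γ_g} g·η` for all `η`, is Fréchet
differentiable, and `u* = S'(φ₀)h` is the unique solution of
`∫ ℰ(u*):C(φ₀)ℰ(η) = -∫ ℰ(u):(C'(φ₀)h)ℰ(η) - ∫ h^N f·η`.  Here `V` models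
`H¹_D(Ω,ℝ^d)` (embedded in `L²` by `ιV`), `W` models the `L²` space of strain fields,
`Estrain` is the strain map `ℰ`, and `gLin` the boundary load `η ↦ ∫_{Γ_g} g·η`. -/
theorem control_to_state_frechet_differentiable
    {N d : ℕ} (hN : 0 < N)
    {X : Type*} [MeasurableSpace X] (μ : Measure X) [IsFiniteMeasure μ]
    {V W : Type*} [NormedAddCommGroup V] [InnerProductSpace ℝ V] [CompleteSpace V]
    [NormedAddCommGroup W] [InnerProductSpace ℝ W] [CompleteSpace W]
    (ιV : V →L[ℝ] Lp (EuclideanSpace ℝ (Fin d)) 2 μ)  -- `H¹_D ↪ L²(Ω,ℝ^d)`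
    (Estrain : V →L[ℝ] W)  -- the strain map `u ↦ ℰ(u)`
    (cK : ℝ) (hKorn : ∀ u : V, ‖u‖ ≤ cK * ‖Estrain u‖)  -- Korn's inequality
    (f : Lp (EuclideanSpace ℝ (Fin d)) 2 μ)  -- volume force
    (gLin : V →L[ℝ] ℝ)  -- boundary load `η ↦ ∫_{Γ_g} g·η`
    (Cmap : Lp (EuclideanSpace ℝ (Fin N)) ⊤ μ → W →L[ℝ] W)  -- `φ ↦ C(φ)`
    (C' : Lp (EuclideanSpace ℝ (Fin N)) ⊤ μ →L[ℝ] (W →L[ℝ] W))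
    (φ₀ : Lp (EuclideanSpace ℝ (Fin N)) ⊤ μ)
    (hC : HasFDerivAt Cmap C' φ₀)  -- `C` Fréchet differentiable at `φ₀`
    (hCsym : ∀ φ (w₁ w₂ : W), ⟪Cmap φ w₁, w₂⟫ = ⟪Cmap φ w₂, w₁⟫)
    (θ ε : ℝ) (hθ : 0 < θ) (hε : 0 < ε)
    -- uniform coercivity of `C` near `φ₀`
    (hcoer : ∀ φ ∈ ball φ₀ ε, ∀ w : W, θ * ‖w‖ ^ 2 ≤ ⟪Cmap φ w, w⟫)
    (S : Lp (EuclideanSpace ℝ (Fin N)) ⊤ μ → V)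
    -- `S(φ)` solves the state equation for `φ` near `φ₀`
    (hS : ∀ φ ∈ ball φ₀ ε, ∀ η : V,
      ⟪Cmap φ (Estrain (S φ)), Estrain η⟫ =
        (∫ x, (1 - (φ : X → EuclideanSpace ℝ (Fin N)) x ⟨N - 1, by omega⟩) *
          ⟪(f : X → EuclideanSpace ℝ (Fin d)) x, (ιV η : X → EuclideanSpace ℝ (Fin d)) x⟫ ∂μ)
          + gLin η) :
    ∃ S' : Lp (EuclideanSpace ℝ (Fin N)) ⊤ μ →L[ℝ] V, HasFDerivAt S S' φ₀ ∧
      ∀ h : Lp (EuclideanSpace ℝ (Fin N)) ⊤ μ,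
        (∀ η : V, ⟪Cmap φ₀ (Estrain (S' h)), Estrain η⟫ =
          -⟪C' h (Estrain (S φ₀)), Estrain η⟫
            - ∫ x, ((h : X → EuclideanSpace ℝ (Fin N)) x ⟨N - 1, by omega⟩) *
                ⟪(f : X → EuclideanSpace ℝ (Fin d)) x, (ιV η : X → EuclideanSpace ℝ (Fin d)) x⟫ ∂μ) ∧
        (∀ u' : V, (∀ η : V, ⟪Cmap φ₀ (Estrain u'), Estrain η⟫ =
          -⟪C' h (Estrain (S φ₀)), Estrain η⟫
            - ∫ x, ((h : X → EuclideanSpace ℝ (Fin N)) x ⟨N - 1, by omega⟩) *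
                ⟪(f : X → EuclideanSpace ℝ (Fin d)) x, (ιV η : X → EuclideanSpace ℝ (Fin d)) x⟫ ∂μ) →
          u' = S' h) := by
  classical
  -- notation
  let i : Fin N := ⟨N - 1, by omega⟩
  let Ead : W →L[ℝ] V := ContinuousLinearMap.adjoint Estrain
  let ιad : Lp (EuclideanSpace ℝ (Fin d)) 2 μ →L[ℝ] V := ContinuousLinearMap.adjoint ιV
  let Φ : (W →L[ℝ] W) →L[ℝ] (V →L[ℝ] V) :=
    ((ContinuousLinearMap.compL ℝ V W V) Ead).comp
      ((ContinuousLinearMap.compL ℝ V W W).flip Estrain)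
  have hΦ : ∀ (T : W →L[ℝ] W) (u η : V), ⟪Φ T u, η⟫ = ⟪T (Estrain u), Estrain η⟫ := by
    intro T u η
    show ⟪Ead (T (Estrain u)), η⟫ = _
    rw [ContinuousLinearMap.adjoint_inner_left]
  -- the load map
  let Gc : Lp (EuclideanSpace ℝ (Fin N)) ⊤ μ →L[ℝ] V := ιad.comp (mulCLM i f)
  have hInner : ∀ (ψ : Lp (EuclideanSpace ℝ (Fin N)) ⊤ μ) (η : V),
      ⟪Gc ψ, η⟫ = ∫ x, ((ψ : X → EuclideanSpace ℝ (Fin N)) x i) *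
        ⟪(f : X → EuclideanSpace ℝ (Fin d)) x, (ιV η : X → EuclideanSpace ℝ (Fin d)) x⟫ ∂μ := by
    intro ψ η
    show ⟪ιad (mulCLM i f ψ), η⟫ = _
    rw [ContinuousLinearMap.adjoint_inner_left, L2.inner_def]
    refine integral_congr_ae ?_
    filter_upwards [coeFn_mulCLM i f ψ] with x hx
    rw [hx, real_inner_smul_left]
  have hIntg : ∀ (ψ : Lp (EuclideanSpace ℝ (Fin N)) ⊤ μ) (η : V),
      Integrable (fun x => ((ψ : X → EuclideanSpace ℝ (Fin N)) x i) *
        ⟪(f : X → EuclideanSpace ℝ (Fin d)) x, (ιV η : X → EuclideanSpace ℝ (Fin d)) x⟫) μ := by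
    intro ψ η
    refine (L2.integrable_inner (𝕜 := ℝ) (mulCLM i f ψ) (ιV η)).congr ?_
    filter_upwards [coeFn_mulCLM i f ψ] with x hx
    rw [hx, real_inner_smul_left]
  have hfInt : ∀ η : V, Integrable (fun x =>
      ⟪(f : X → EuclideanSpace ℝ (Fin d)) x, (ιV η : X → EuclideanSpace ℝ (Fin d)) x⟫) μ :=
    fun η => L2.integrable_inner (𝕜 := ℝ) f (ιV η)
  have hιad : ∀ η : V, ⟪ιad f, η⟫ = ∫ x,
      ⟪(f : X → EuclideanSpace ℝ (Fin d)) x, (ιV η : X → EuclideanSpace ℝ (Fin d)) x⟫ ∂μ := by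
    intro η
    show ⟪ιad f, η⟫ = _
    rw [ContinuousLinearMap.adjoint_inner_left, L2.inner_def]
  -- Riesz representative of the boundary load and the affine right-hand side
  let gstar : V := (InnerProductSpace.toDual ℝ V).symm gLin
  let Fmap : Lp (EuclideanSpace ℝ (Fin N)) ⊤ μ → V := fun φ => ιad f + gstar - Gc φ
  have hgstar : ∀ η : V, ⟪gstar, η⟫ = gLin η := fun η => InnerProductSpace.toDual_symm_apply
  have hF : ∀ (φ : Lp (EuclideanSpace ℝ (Fin N)) ⊤ μ) (η : V),
      ⟪Fmap φ, η⟫ = (∫ x, ⟪(f : X → EuclideanSpace ℝ (Fin d)) x,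
          (ιV η : X → EuclideanSpace ℝ (Fin d)) x⟫ ∂μ) + gLin η
        - ∫ x, ((φ : X → EuclideanSpace ℝ (Fin N)) x i) *
            ⟪(f : X → EuclideanSpace ℝ (Fin d)) x, (ιV η : X → EuclideanSpace ℝ (Fin d)) x⟫ ∂μ := by
    intro φ η
    show ⟪ιad f + gstar - Gc φ, η⟫ = _
    rw [inner_sub_left, inner_add_left, hιad η, hgstar η, hInner φ η]
  -- the state equation as an operator identity
  have hEq : ∀ φ ∈ ball φ₀ ε, Φ (Cmap φ) (S φ) = Fmap φ := by
    intro φ hφ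
    refine ext_inner_right ℝ fun η => ?_
    rw [hΦ (Cmap φ) (S φ) η, hS φ hφ η, hF φ η]
    have hsplit : ∫ x, (1 - (φ : X → EuclideanSpace ℝ (Fin N)) x i) *
        ⟪(f : X → EuclideanSpace ℝ (Fin d)) x, (ιV η : X → EuclideanSpace ℝ (Fin d)) x⟫ ∂μ
        = (∫ x, ⟪(f : X → EuclideanSpace ℝ (Fin d)) x,
            (ιV η : X → EuclideanSpace ℝ (Fin d)) x⟫ ∂μ)
          - ∫ x, ((φ : X → EuclideanSpace ℝ (Fin N)) x i) *
            ⟪(f : X → EuclideanSpace ℝ (Fin d)) x, (ιV η : X → EuclideanSpace ℝ (Fin d)) x⟫ ∂μ := by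
      rw [← integral_sub (hfInt η) (hIntg φ η)]
      refine integral_congr_ae (Filter.Eventually.of_forall fun x => ?_)
      ring
    rw [hsplit]
    ring
  -- coercivity of the operator
  set c : ℝ := max cK 1 with hcdef
  have hc : 0 < c := lt_of_lt_of_le one_pos (le_max_right _ _)
  have hK' : ∀ u : V, ‖u‖ ≤ c * ‖Estrain u‖ := fun u =>
    (hKorn u).trans (mul_le_mul_of_nonneg_right (le_max_left _ _) (norm_nonneg _))
  have hcoA : ∀ φ ∈ ball φ₀ ε, ∀ u : V, θ / c ^ 2 * ‖u‖ * ‖u‖ ≤ ⟪Φ (Cmap φ) u, u⟫ := by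
    intro φ hφ u
    have h1 := hcoer φ hφ (Estrain u)
    have h2 := hK' u
    rw [hΦ (Cmap φ) u u]
    have hn : (0:ℝ) ≤ ‖u‖ := norm_nonneg u
    calc θ / c ^ 2 * ‖u‖ * ‖u‖ = θ / c ^ 2 * (‖u‖ * ‖u‖) := by ring
      _ ≤ θ / c ^ 2 * ((c * ‖Estrain u‖) * (c * ‖Estrain u‖)) := by
          refine mul_le_mul_of_nonneg_left (mul_self_le_mul_self hn h2) (by positivity)
      _ = θ * ‖Estrain u‖ ^ 2 := by field_simp
      _ ≤ ⟪Cmap φ (Estrain u), Estrain u⟫ := h1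
  -- invertibility of the operator (Lax–Milgram)
  have hUnit : ∀ φ ∈ ball φ₀ ε, IsUnit (Φ (Cmap φ)) := by
    intro φ hφ
    let B₀ : V →L[ℝ] V →L[ℝ] ℝ :=
      (isBoundedBilinearMap_inner (𝕜 := ℝ) (E := V)).toContinuousLinearMap
    have coer : IsCoercive (B₀.comp (Φ (Cmap φ))) := by
      refine ⟨θ / c ^ 2, by positivity, fun u => ?_⟩
      exact hcoA φ hφ u
    let e := coer.continuousLinearEquivOfBilin
    have he : ∀ v : V, Φ (Cmap φ) v = e v := by
      intro v
      refine ext_inner_right ℝ fun w => ?_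
      rw [coer.continuousLinearEquivOfBilin_apply]
      rfl
    refine ⟨⟨Φ (Cmap φ), (e.symm : V →L[ℝ] V), ?_, ?_⟩, rfl⟩
    · ext v
      show Φ (Cmap φ) ((e.symm : V →L[ℝ] V) v) = v
      rw [he]
      exact e.apply_symm_apply v
    · ext v
      show (e.symm : V →L[ℝ] V) (Φ (Cmap φ) v) = v
      rw [he]
      exact e.symm_apply_apply v
  have hmem0 : φ₀ ∈ ball φ₀ ε := mem_ball_self hε
  have hu0 : IsUnit (Φ (Cmap φ₀)) := hUnit φ₀ hmem0
  set i₀ : V →L[ℝ] V := (↑hu0.unit⁻¹ : V →L[ℝ] V) with hi₀def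
  have hi₀ : Ring.inverse (Φ (Cmap φ₀)) = i₀ := by
    rw [← IsUnit.unit_spec hu0, Ring.inverse_unit]
  have hA0inv : Φ (Cmap φ₀) * i₀ = 1 := IsUnit.mul_val_inv hu0
  have hinvA0 : i₀ * Φ (Cmap φ₀) = 1 := IsUnit.val_inv_mul hu0
  -- derivative of the operator family and of the inverse family
  have hA : HasFDerivAt (fun φ => Φ (Cmap φ)) (Φ.comp C') φ₀ :=
    (Φ.hasFDerivAt).comp φ₀ hC
  have hinvd : HasFDerivAt (fun φ => Ring.inverse (Φ (Cmap φ)))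
      ((-ContinuousLinearMap.mulLeftRight ℝ (V →L[ℝ] V) i₀ i₀).comp (Φ.comp C')) φ₀ := by
    have h := hasFDerivAt_ringInverse (𝕜 := ℝ) hu0.unit
    rw [IsUnit.unit_spec] at h
    exact h.comp φ₀ hA
  have hFd : HasFDerivAt Fmap (-Gc) φ₀ := HasFDerivAt.const_sub (Gc.hasFDerivAt) (ιad f + gstar)
  have hT : HasFDerivAt (fun φ => Ring.inverse (Φ (Cmap φ)) (Fmap φ))
      ((Ring.inverse (Φ (Cmap φ₀))).comp (-Gc) +
        ((-ContinuousLinearMap.mulLeftRight ℝ (V →L[ℝ] V) i₀ i₀).comp (Φ.comp C')).flip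
          (Fmap φ₀)) φ₀ := hinvd.clm_apply hFd
  rw [hi₀] at hT
  set D : Lp (EuclideanSpace ℝ (Fin N)) ⊤ μ →L[ℝ] V :=
    i₀.comp (-Gc) +
      ((-ContinuousLinearMap.mulLeftRight ℝ (V →L[ℝ] V) i₀ i₀).comp (Φ.comp C')).flip
        (Fmap φ₀) with hDdef
  -- `S` agrees with the inverse formula near `φ₀`
  have hev : S =ᶠ[nhds φ₀] fun φ => Ring.inverse (Φ (Cmap φ)) (Fmap φ) := by
    refine Filter.eventuallyEq_of_mem (ball_mem_nhds φ₀ hε) fun φ hφ => ?_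
    have h1 := hEq φ hφ
    have hu := hUnit φ hφ
    have : Ring.inverse (Φ (Cmap φ)) (Fmap φ) = S φ := by
      rw [← h1, ← ContinuousLinearMap.mul_apply, Ring.inverse_mul_cancel _ hu,
        ContinuousLinearMap.one_apply]
    exact this.symm
  have hSd : HasFDerivAt S D φ₀ := hT.congr_of_eventuallyEq hev
  -- identification of the derivative
  have hA0 : Φ (Cmap φ₀) (S φ₀) = Fmap φ₀ := hEq φ₀ hmem0
  have hi0F : i₀ (Fmap φ₀) = S φ₀ := by
    rw [← hA0, ← ContinuousLinearMap.mul_apply, hinvA0, ContinuousLinearMap.one_apply]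
  have keyD : ∀ h : Lp (EuclideanSpace ℝ (Fin N)) ⊤ μ,
      Φ (Cmap φ₀) (D h) = -(Gc h) - Φ (C' h) (S φ₀) := by
    intro h
    have e1 : D h = i₀ (-(Gc h)) + -((i₀ * Φ (C' h) * i₀) (Fmap φ₀)) := by
      simp only [hDdef, ContinuousLinearMap.add_apply, ContinuousLinearMap.coe_comp',
        Function.comp_apply, ContinuousLinearMap.flip_apply, ContinuousLinearMap.neg_apply,
        ContinuousLinearMap.mulLeftRight_apply]
    have t1 : Φ (Cmap φ₀) (i₀ (-(Gc h))) = -(Gc h) := by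
      rw [← ContinuousLinearMap.mul_apply, hA0inv, ContinuousLinearMap.one_apply]
    have t2 : Φ (Cmap φ₀) ((i₀ * Φ (C' h) * i₀) (Fmap φ₀)) = Φ (C' h) (S φ₀) := by
      rw [← ContinuousLinearMap.mul_apply]
      have hassoc : Φ (Cmap φ₀) * (i₀ * Φ (C' h) * i₀) = Φ (C' h) * i₀ := by
        rw [← mul_assoc, ← mul_assoc, hA0inv, one_mul]
      rw [hassoc, ContinuousLinearMap.mul_apply, hi0F]
    have t2' : Φ (Cmap φ₀) (-((i₀ * Φ (C' h) * i₀) (Fmap φ₀))) = -(Φ (C' h) (S φ₀)) := by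
      rw [map_neg, t2]
    rw [e1, map_add, t1, t2']
    abel
  -- conclusion
  refine ⟨D, hSd, fun h => ?_⟩
  have hDchar : ∀ η : V, ⟪Cmap φ₀ (Estrain (D h)), Estrain η⟫ =
      -⟪C' h (Estrain (S φ₀)), Estrain η⟫
        - ∫ x, ((h : X → EuclideanSpace ℝ (Fin N)) x i) *
            ⟪(f : X → EuclideanSpace ℝ (Fin d)) x, (ιV η : X → EuclideanSpace ℝ (Fin d)) x⟫ ∂μ := by
    intro η
    rw [← hΦ (Cmap φ₀) (D h) η, keyD h, inner_sub_left, inner_neg_left, hΦ (C' h) (S φ₀) η,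
      hInner h η]
    ring
  refine ⟨hDchar, fun u' hu' => ?_⟩
  have h1 : ∀ η : V, ⟪Φ (Cmap φ₀) u', η⟫ = ⟪Φ (Cmap φ₀) (D h), η⟫ := by
    intro η
    rw [hΦ (Cmap φ₀) u' η, hΦ (Cmap φ₀) (D h) η, hu' η, hDchar η]
  have h2 : Φ (Cmap φ₀) u' = Φ (Cmap φ₀) (D h) := ext_inner_right ℝ h1
  have h3 : u' = i₀ (Φ (Cmap φ₀) u') := by
    rw [← ContinuousLinearMap.mul_apply, hinvA0, ContinuousLinearMap.one_apply]
  rw [h3, h2, ← ContinuousLinearMap.mul_apply, hinvA0, ContinuousLinearMap.one_apply]
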